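/- Let {λₙ} be interpolating, {wₙ} ⊂ ℂ∖{0} bounded with (1−|λₙ|)log|wₙ| ↛ 0, and let φ = F·I ∈ N⁺ with F outer and I inner satisfy φ(λₙ)=wₙ for all n. Then liminf_n |I(λₙ)| = 0. -/

import Mathlib

open MeasureTheory Metric Set Filter Topology

noncomputable def poissonRep (W : ℝ → ℝ) (z : ℂ) : ℂ :=
  (2 * (Real.pi : ℂ))⁻¹ * ∫ t in (-Real.pi)..Real.pi,
    ((Complex.exp ((t : ℂ) * Complex.I) + z) / (Complex.exp ((t : ℂ) * Complex.I) - z)) * (W t : ℂ)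

def IsOuterF (φ : ℂ → ℂ) : Prop :=
  ∃ W : ℝ → ℝ, IntervalIntegrable W volume (-Real.pi) Real.pi ∧
    ∀ z ∈ Metric.ball (0 : ℂ) 1, φ z = Complex.exp (poissonRep W z)

/-- Inner function: bounded analytic on `𝔻` with unimodular radial boundary values a.e. -/
def IsInnerF (I : ℂ → ℂ) : Prop :=
  DifferentiableOn ℂ I (Metric.ball 0 1) ∧
  (∀ z ∈ Metric.ball (0 : ℂ) 1, ‖I z‖ ≤ 1) ∧
  ∀ᵐ (t : ℝ) ∂(volume.restrict (Set.Ioc (-Real.pi) Real.pi)),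
    Tendsto (fun r : ℝ => ‖I ((r : ℂ) * Complex.exp ((t : ℂ) * Complex.I))‖)
      (𝓝[<] (1 : ℝ)) (𝓝 1)

def IsInterpolating (Λ : ℕ → ℂ) : Prop :=
  (∀ n, Λ n ∈ Metric.ball (0 : ℂ) 1) ∧ Function.Injective Λ ∧
  ∃ δ : ℝ, 0 < δ ∧ ∀ n : ℕ, δ ≤
    ∏' k : ℕ, if k = n then (1 : ℝ) else
      ‖(Λ k - Λ n) / (1 - (starRingEnd ℂ) (Λ k) * Λ n)‖

lemma normSq_id (a b : ℂ) :
    Complex.normSq (1 - (starRingEnd ℂ) a * b) - Complex.normSq (a - b)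
      = (1 - Complex.normSq a) * (1 - Complex.normSq b) := by
  simp only [Complex.normSq_apply, Complex.sub_re, Complex.sub_im, Complex.one_re,
    Complex.one_im, Complex.mul_re, Complex.mul_im, Complex.conj_re, Complex.conj_im]
  ring

lemma pseudo_le_one {a b : ℂ} (ha : ‖a‖ < 1) (hb : ‖b‖ < 1) :
    ‖(a - b) / (1 - (starRingEnd ℂ) a * b)‖ ≤ 1 := by
  rw [norm_div]
  rcases eq_or_ne (1 - (starRingEnd ℂ) a * b) 0 with h | h
  · simp [h]
  · rw [div_le_one (by simpa [norm_pos_iff] using h)]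
    have := normSq_id a b
    have ha' : Complex.normSq a < 1 := by
      rw [← Complex.sq_norm] at *; nlinarith [norm_nonneg a]
    have hb' : Complex.normSq b < 1 := by
      rw [← Complex.sq_norm] at *; nlinarith [norm_nonneg b]
    have h1 : Complex.normSq (a - b) ≤ Complex.normSq (1 - (starRingEnd ℂ) a * b) := by
      nlinarith
    have := norm_nonneg (a - b)
    have := norm_nonneg (1 - (starRingEnd ℂ) a * b)
    rw [← Complex.sq_norm, ← Complex.sq_norm] at h1
    nlinarith

lemma tprod_le_single {a : ℕ → ℝ} (h0 : ∀ k, 0 ≤ a k) (h1 : ∀ k, a k ≤ 1) (k : ℕ) :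
    (∏' n, a n) ≤ a k := by
  set f : Finset ℕ → ℝ := fun s => ∏ i ∈ s, a i with hf
  have hanti : Antitone f := by
    intro s t hst
    rw [hf]
    simp only
    rw [← Finset.prod_sdiff hst]
    have h2 : (∏ i ∈ t \ s, a i) ≤ 1 := Finset.prod_le_one (fun i _ => h0 i) (fun i _ => h1 i)
    have h3 : (0:ℝ) ≤ ∏ i ∈ s, a i := Finset.prod_nonneg (fun i _ => h0 i)
    nlinarith [Finset.prod_nonneg (fun i (_ : i ∈ t \ s) => h0 i)]
  have hbdd : BddBelow (Set.range f) := by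
    refine ⟨0, ?_⟩
    rintro x ⟨s, rfl⟩
    exact Finset.prod_nonneg (fun i _ => h0 i)
  have htend : Filter.Tendsto f Filter.atTop (nhds (⨅ s, f s)) := tendsto_atTop_ciInf hanti hbdd
  have hp : HasProd a (⨅ s, f s) := htend
  rw [hp.tprod_eq]
  calc (⨅ s, f s) ≤ f {k} := ciInf_le hbdd {k}
    _ = a k := Finset.prod_singleton a k

noncomputable def pker (z : ℂ) (t : ℝ) : ℝ :=
  (1 - Complex.normSq z) / Complex.normSq (Complex.exp ((t : ℂ) * Complex.I) - z)

lemma exp_sub_ne {z : ℂ} (hz : ‖z‖ < 1) (t : ℝ) :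
    Complex.exp ((t : ℂ) * Complex.I) - z ≠ 0 := by
  intro h
  have he : ‖Complex.exp ((t : ℂ) * Complex.I)‖ = 1 :=
    Complex.norm_exp_ofReal_mul_I t
  rw [sub_eq_zero] at h
  rw [h] at he
  exact absurd he (by linarith)

lemma kernel_re {z : ℂ} (hz : ‖z‖ < 1) (t : ℝ) :
    ((Complex.exp ((t : ℂ) * Complex.I) + z) / (Complex.exp ((t : ℂ) * Complex.I) - z)).re
      = pker z t := by
  set e := Complex.exp ((t : ℂ) * Complex.I) with he
  have habs : ‖e‖ = 1 := Complex.norm_exp_ofReal_mul_I t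
  have hnsq : e.re * e.re + e.im * e.im = 1 := by
    have h := Complex.sq_norm e
    rw [habs] at h
    rw [Complex.normSq_apply] at h
    nlinarith
  have hne : Complex.normSq (e - z) ≠ 0 := by
    simpa [Complex.normSq_eq_zero] using sub_ne_zero.mpr
      (fun h => by rw [h] at habs; exact absurd habs (by linarith))
  rw [Complex.div_re, pker]
  rw [← add_div]
  congr 1
  simp only [Complex.add_re, Complex.add_im, Complex.sub_re, Complex.sub_im,
    Complex.normSq_apply]
  linear_combination hnsq

lemma pker_nonneg {z : ℂ} (hz : ‖z‖ < 1) (t : ℝ) : 0 ≤ pker z t := by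
  have h1 : Complex.normSq z < 1 := by
    rw [← Complex.sq_norm]; nlinarith [norm_nonneg z]
  exact div_nonneg (by linarith) (Complex.normSq_nonneg _)

lemma pker_bound {z : ℂ} (hz : ‖z‖ < 1) (t : ℝ) :
    (1 - ‖z‖) * pker z t ≤ 2 := by
  set e := Complex.exp ((t : ℂ) * Complex.I) with he
  have habs : ‖e‖ = 1 := Complex.norm_exp_ofReal_mul_I t
  set r := ‖z‖ with hr
  have hr0 : 0 ≤ r := norm_nonneg z
  have hlow : 1 - r ≤ ‖e - z‖ := by
    have h := norm_sub_norm_le e z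
    rw [habs] at h; linarith
  have hN : (1 - r)^2 ≤ Complex.normSq (e - z) := by
    rw [← Complex.sq_norm]
    nlinarith [norm_nonneg (e - z)]
  have hnsqz : Complex.normSq z = r^2 := by rw [← Complex.sq_norm]
  rw [pker, hnsqz, ← he]
  have hNpos : (0:ℝ) < Complex.normSq (e - z) := by nlinarith
  rw [mul_div_assoc', div_le_iff₀ hNpos]
  nlinarith

lemma cont_ker {z : ℂ} (hz : ‖z‖ < 1) :
    Continuous (fun t : ℝ => (Complex.exp ((t : ℂ) * Complex.I) + z)
      / (Complex.exp ((t : ℂ) * Complex.I) - z)) := by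
  have hc : Continuous (fun t : ℝ => Complex.exp ((t : ℂ) * Complex.I)) := by
    exact Complex.continuous_exp.comp (by continuity)
  exact (hc.add continuous_const).div (hc.sub continuous_const) (fun t => exp_sub_ne hz t)

lemma cont_pker {z : ℂ} (hz : ‖z‖ < 1) : Continuous (pker z) := by
  have hc : Continuous (fun t : ℝ => Complex.exp ((t : ℂ) * Complex.I)) := by
    exact Complex.continuous_exp.comp (by continuity)
  apply continuous_const.div
  · exact Complex.continuous_normSq.comp (hc.sub continuous_const)
  · intro t
    simpa [Complex.normSq_eq_zero] using exp_sub_ne hz t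

lemma integrable_cintegrand {W : ℝ → ℝ}
    (hW : IntervalIntegrable W volume (-Real.pi) Real.pi) {z : ℂ} (hz : ‖z‖ < 1) :
    IntervalIntegrable (fun t => ((Complex.exp ((t : ℂ) * Complex.I) + z)
      / (Complex.exp ((t : ℂ) * Complex.I) - z)) * (W t : ℂ)) volume (-Real.pi) Real.pi := by
  have hWC : IntervalIntegrable (fun t => (W t : ℂ)) volume (-Real.pi) Real.pi :=
    ⟨hW.1.ofReal, hW.2.ofReal⟩
  exact hWC.continuousOn_mul (cont_ker hz).continuousOn

lemma re_poissonRep {W : ℝ → ℝ}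
    (hW : IntervalIntegrable W volume (-Real.pi) Real.pi) {z : ℂ} (hz : ‖z‖ < 1) :
    (poissonRep W z).re
      = (2 * Real.pi)⁻¹ * ∫ t in (-Real.pi)..Real.pi, pker z t * W t := by
  have hint := integrable_cintegrand hW hz
  have h1 : (∫ t in (-Real.pi)..Real.pi,
      ((Complex.exp ((t : ℂ) * Complex.I) + z) / (Complex.exp ((t : ℂ) * Complex.I) - z))
        * (W t : ℂ)).re
      = ∫ t in (-Real.pi)..Real.pi, pker z t * W t := by
    have h0 := Complex.reCLM.intervalIntegral_comp_comm hint
    simp only [Complex.reCLM_apply] at h0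
    rw [← h0]
    apply intervalIntegral.integral_congr
    intro t _
    simp [Complex.mul_re, Complex.ofReal_re, Complex.ofReal_im, kernel_re hz t]
  rw [poissonRep]
  have h2 : (2 * (Real.pi : ℂ))⁻¹ = (((2 * Real.pi)⁻¹ : ℝ) : ℂ) := by push_cast; ring
  rw [h2, Complex.re_ofReal_mul, h1]

lemma circle_fiber_countable (ζ : ℂ) :
    Set.Countable {t : ℝ | Complex.exp ((t:ℂ) * Complex.I) = ζ} := by
  by_cases h : ∃ t₀ : ℝ, Complex.exp ((t₀:ℂ) * Complex.I) = ζ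
  · obtain ⟨t₀, ht₀⟩ := h
    apply Set.Countable.mono (s₁ := {t : ℝ | Complex.exp ((t:ℂ) * Complex.I) = ζ})
      ?_ (Set.countable_range (fun k : ℤ => t₀ + k * (2 * Real.pi)))
    intro t ht
    simp only [Set.mem_setOf_eq] at ht
    have h1 : Complex.exp ((t:ℂ) * Complex.I - (t₀:ℂ) * Complex.I) = 1 := by
      rw [Complex.exp_sub, ht, ht₀, div_self]
      rw [← ht₀]
      exact Complex.exp_ne_zero _
    rw [Complex.exp_eq_one_iff] at h1
    obtain ⟨k, hk⟩ := h1
    refine ⟨k, ?_⟩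
    show t₀ + (k:ℝ) * (2 * Real.pi) = t
    have h2 : ((t:ℂ) - (t₀:ℂ)) * Complex.I = ((k:ℂ) * (2 * Real.pi)) * Complex.I := by
      rw [sub_mul, hk]; ring
    have h3 : (t:ℂ) - (t₀:ℂ) = (k:ℂ) * (2 * Real.pi) :=
      mul_right_cancel₀ Complex.I_ne_zero h2
    have h4 : ((t - t₀ : ℝ) : ℂ) = (((k : ℝ) * (2 * Real.pi) : ℝ) : ℂ) := by push_cast; exact h3
    have h5 := Complex.ofReal_inj.mp h4
    linarith
  · push_neg at h
    have : {t : ℝ | Complex.exp ((t:ℂ) * Complex.I) = ζ} = ∅ := by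
      ext t; simpa using h t
    simp [this]

lemma tendsto_aux {W : ℝ → ℝ} (hW : IntervalIntegrable W volume (-Real.pi) Real.pi)
    (Λ : ℕ → ℂ) (hball : ∀ n, ‖Λ n‖ < 1)
    (habs : Tendsto (fun n => ‖Λ n‖) atTop (𝓝 1)) :
    Tendsto (fun n => (1 - ‖Λ n‖) * (poissonRep W (Λ n)).re) atTop (𝓝 0) := by
  have hrep : ∀ n, (1 - ‖Λ n‖) * (poissonRep W (Λ n)).re
      = (2 * Real.pi)⁻¹ * ∫ t in (-Real.pi)..Real.pi,
          ((1 - ‖Λ n‖) * pker (Λ n) t) * W t := by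
    intro n
    rw [re_poissonRep hW (hball n), ← mul_assoc, mul_comm (1 - ‖Λ n‖) (2 * Real.pi)⁻¹,
      mul_assoc, ← intervalIntegral.integral_const_mul]
    congr 1
    apply intervalIntegral.integral_congr
    intro t _
    ring
  suffices hmain : Tendsto (fun n => ∫ t in (-Real.pi)..Real.pi,
      ((1 - ‖Λ n‖) * pker (Λ n) t) * W t) atTop (𝓝 0) by
    have h := hmain.const_mul ((2 * Real.pi)⁻¹)
    rw [mul_zero] at h
    exact Tendsto.congr (fun n => (hrep n).symm) h
  apply tendsto_of_subseq_tendsto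
  intro ns hns
  obtain ⟨ζ, hζmem, φ, hφmono, hφtend⟩ :=
    (isCompact_closedBall (0:ℂ) 1).tendsto_subseq (x := fun k => Λ (ns k))
      (fun k => by simpa [Metric.mem_closedBall, Complex.dist_eq] using (hball (ns k)).le)
  refine ⟨φ, ?_⟩
  have hnsφ : Tendsto (ns ∘ φ) atTop atTop := hns.comp hφmono.tendsto_atTop
  have hζabs : ‖ζ‖ = 1 := by
    have h1 : Tendsto (fun k => ‖Λ (ns (φ k))‖) atTop (𝓝 (‖ζ‖)) :=
      (continuous_norm.tendsto ζ).comp hφtend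
    have h2 : Tendsto (fun k => ‖Λ (ns (φ k))‖) atTop (𝓝 1) := habs.comp hnsφ
    exact tendsto_nhds_unique h1 h2
  have hWint : IntegrableOn W (Set.uIoc (-Real.pi) Real.pi) volume := intervalIntegrable_iff.mp hW
  have hWmeas : AEStronglyMeasurable W (volume.restrict (Set.uIoc (-Real.pi) Real.pi)) :=
    hWint.aestronglyMeasurable
  have hS : volume {t : ℝ | Complex.exp ((t:ℂ) * Complex.I) = ζ} = 0 :=
    (circle_fiber_countable ζ).measure_zero _
  have hae : ∀ᵐ t : ℝ, ¬ Complex.exp ((t:ℂ) * Complex.I) = ζ :=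
    measure_eq_zero_iff_ae_notMem.mp hS
  have hdct := intervalIntegral.tendsto_integral_filter_of_dominated_convergence
    (μ := volume) (a := -Real.pi) (b := Real.pi)
    (F := fun k t => ((1 - ‖Λ (ns (φ k))‖) * pker (Λ (ns (φ k))) t) * W t)
    (f := fun _ => (0:ℝ)) (bound := fun t => 2 * |W t|)
    (Filter.Eventually.of_forall (fun k => by
      exact ((continuous_const.mul (cont_pker (hball (ns (φ k))))).aestronglyMeasurable).mul hWmeas))
    (Filter.Eventually.of_forall (fun k => Filter.Eventually.of_forall (fun x _ => by
      have h0 : 0 ≤ (1 - ‖Λ (ns (φ k))‖) * pker (Λ (ns (φ k))) x :=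
        mul_nonneg (by linarith [hball (ns (φ k))]) (pker_nonneg (hball (ns (φ k))) x)
      have h2 := pker_bound (hball (ns (φ k))) x
      rw [Real.norm_eq_abs, abs_mul, abs_of_nonneg h0]
      exact mul_le_mul_of_nonneg_right h2 (abs_nonneg _))))
    ((hW.norm).const_mul 2)
    (by
      filter_upwards [hae] with t ht _
      have hne : Complex.normSq (Complex.exp ((t:ℂ) * Complex.I) - ζ) ≠ 0 := by
        simpa [Complex.normSq_eq_zero, sub_eq_zero] using ht
      have h1 : Tendsto (fun k => 1 - ‖Λ (ns (φ k))‖) atTop (𝓝 0) := by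
        have := (habs.comp hnsφ).const_sub 1
        simpa using this
      have h2 : Tendsto (fun k => (1 - Complex.normSq (Λ (ns (φ k))))
          / Complex.normSq (Complex.exp ((t:ℂ) * Complex.I) - Λ (ns (φ k)))) atTop
          (𝓝 ((1 - Complex.normSq ζ) / Complex.normSq (Complex.exp ((t:ℂ) * Complex.I) - ζ))) := by
        apply Tendsto.div
        · exact tendsto_const_nhds.sub ((Complex.continuous_normSq.tendsto ζ).comp hφtend)
        · exact ((Complex.continuous_normSq.comp (continuous_const.sub continuous_id)).tendsto ζ).comp hφtend
        · exact hne
      have h3 := (h1.mul h2).mul_const (W t)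
      rw [zero_mul, zero_mul] at h3
      exact h3.congr (fun k => by rw [pker]))
  simpa using hdct

lemma abs_tendsto_one (Λ : ℕ → ℂ) (hball : ∀ n, ‖Λ n‖ < 1)
    (hinj : Function.Injective Λ) (δ : ℝ) (hδ : 0 < δ)
    (hsep : ∀ k n : ℕ, k ≠ n →
      δ ≤ ‖(Λ k - Λ n) / (1 - (starRingEnd ℂ) (Λ k) * Λ n)‖) :
    Tendsto (fun n => ‖Λ n‖) atTop (𝓝 1) := by
  by_contra hcon
  rw [Metric.tendsto_atTop] at hcon
  push_neg at hcon
  obtain ⟨ε, hε, hfreq⟩ := hcon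
  have hfreq' : ∃ᶠ n in atTop, ‖Λ n‖ ≤ 1 - ε := by
    rw [Filter.frequently_atTop]
    intro N
    obtain ⟨n, hn, hd⟩ := hfreq N
    refine ⟨n, hn, ?_⟩
    rw [Real.dist_eq, abs_sub_comm, abs_of_nonneg (by linarith [hball n])] at hd
    linarith
  obtain ⟨g, hg, hP⟩ := Filter.extraction_of_frequently_atTop hfreq'
  have hε1 : ε ≤ 1 := by linarith [hP 0, norm_nonneg (Λ (g 0))]
  obtain ⟨ζ, _, φ, hφ, hconv⟩ :=
    (isCompact_closedBall (0:ℂ) (1-ε)).tendsto_subseq (x := fun k => Λ (g k))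
      (fun k => by simpa [Metric.mem_closedBall, Complex.dist_eq] using hP k)
  have hcauchy : CauchySeq (fun k => Λ (g (φ k))) := hconv.cauchySeq
  set η := δ * (1 - (1-ε)^2) with hη'
  have hη : 0 < η := by
    have : (1-ε)^2 < 1 := by nlinarith
    have : 0 < 1 - (1-ε)^2 := by linarith
    positivity
  rw [Metric.cauchySeq_iff] at hcauchy
  obtain ⟨N, hN⟩ := hcauchy η hη
  set a := Λ (g (φ (N+1))) with ha'
  set b := Λ (g (φ N)) with hb'
  have hne : g (φ (N+1)) ≠ g (φ N) := by
    intro h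
    exact absurd (hφ.injective (hg.injective h)) (by omega)
  have hdist : dist a b < η := hN (N+1) (by omega) N le_rfl
  have hsep' := hsep (g (φ (N+1))) (g (φ N)) hne
  have habs_ab : ‖a‖ ≤ 1 - ε := hP _
  have habs_bb : ‖b‖ ≤ 1 - ε := hP _
  have hconj : ‖(starRingEnd ℂ) a * b‖ ≤ (1-ε)^2 := by
    rw [norm_mul, Complex.norm_conj]
    calc ‖a‖ * ‖b‖ ≤ (1-ε) * (1-ε) := by
          apply mul_le_mul habs_ab habs_bb (norm_nonneg b) (by linarith)
      _ = (1-ε)^2 := by ring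
  have hden : 1 - (1-ε)^2 ≤ ‖1 - (starRingEnd ℂ) a * b‖ := by
    have h := norm_sub_norm_le (1:ℂ) ((starRingEnd ℂ) a * b)
    simp only [norm_one] at h
    linarith
  have hdenpos : 0 < ‖1 - (starRingEnd ℂ) a * b‖ := by
    have : (1-ε)^2 < 1 := by nlinarith
    linarith
  rw [norm_div] at hsep'
  rw [le_div_iff₀ hdenpos] at hsep'
  have : η ≤ ‖a - b‖ := by
    calc η = δ * (1 - (1-ε)^2) := rfl
      _ ≤ δ * ‖1 - (starRingEnd ℂ) a * b‖ := by
          apply mul_le_mul_of_nonneg_left hden hδ.le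
      _ ≤ ‖a - b‖ := hsep'
  rw [Complex.dist_eq] at hdist
  linarith

/-- If `Λ` is interpolating, `{wₙ} ⊂ ℂ∖{0}` is bounded with
`(1-|λₙ|)log|wₙ| ↛ 0`, and `φ = F·I` (with `F` outer, `I` inner) satisfies
`φ(λₙ) = wₙ`, then `liminf |I(λₙ)| = 0`. -/
theorem inner_factor_small_on_interp (Λ : ℕ → ℂ) (hΛ : IsInterpolating Λ)
    (w : ℕ → ℂ) (hw0 : ∀ n, w n ≠ 0)
    (hwb : ∃ M : ℝ, ∀ n, ‖w n‖ ≤ M)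
    (hnot : ¬ Tendsto
      (fun n => (1 - ‖Λ n‖) * Real.log (‖w n‖)) atTop (𝓝 0))
    (F I : ℂ → ℂ) (hF : IsOuterF F) (hI : IsInnerF I)
    (hint : ∀ n, F (Λ n) * I (Λ n) = w n) :
    Filter.liminf (fun n => ‖I (Λ n)‖) atTop = 0 := by

  obtain ⟨hball0, hinj, δ, hδ, htp⟩ := hΛ
  have hball : ∀ n, ‖Λ n‖ < 1 := fun n => by
    simpa [Metric.mem_ball, Complex.dist_eq] using hball0 n
  have hsep : ∀ k n : ℕ, k ≠ n →
      δ ≤ ‖(Λ k - Λ n) / (1 - (starRingEnd ℂ) (Λ k) * Λ n)‖ := by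
    intro k n hk
    have h0 : ∀ j, 0 ≤ (if j = n then (1:ℝ) else
        ‖(Λ j - Λ n) / (1 - (starRingEnd ℂ) (Λ j) * Λ n)‖) := fun j => by
      split
      · norm_num
      · exact norm_nonneg _
    have h1 : ∀ j, (if j = n then (1:ℝ) else
        ‖(Λ j - Λ n) / (1 - (starRingEnd ℂ) (Λ j) * Λ n)‖) ≤ 1 := fun j => by
      split
      · norm_num
      · exact pseudo_le_one (hball j) (hball n)
    have h2 := tprod_le_single h0 h1 k
    rw [if_neg hk] at h2
    exact le_trans (htp n) h2
  have habs1 := abs_tendsto_one Λ hball hinj δ hδ hsep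
  obtain ⟨W, hW, hFeq⟩ := hF
  set u : ℕ → ℝ := fun n => ‖I (Λ n)‖ with hu
  by_contra hL
  have hub : ∀ n, u n ≤ 1 := fun n => hI.2.1 _ (hball0 n)
  have hlb : ∀ n, 0 ≤ u n := fun n => norm_nonneg _
  have hbdd_ge : IsBoundedUnder (· ≥ ·) atTop u := Filter.isBoundedUnder_of ⟨0, fun n => hlb n⟩
  have hcob : IsCoboundedUnder (· ≥ ·) atTop u :=
    Filter.IsBoundedUnder.isCoboundedUnder_ge (Filter.isBoundedUnder_of ⟨1, fun n => hub n⟩)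
  have hL0 : 0 ≤ liminf u atTop := le_liminf_of_le hcob (Filter.Eventually.of_forall hlb)
  have hLpos : 0 < liminf u atTop := lt_of_le_of_ne hL0 (Ne.symm hL)
  set L := liminf u atTop with hLdef
  have hev : ∀ᶠ n in atTop, L/2 < u n :=
    eventually_lt_of_lt_liminf (by linarith) hbdd_ge
  have hIne : ∀ n, I (Λ n) ≠ 0 := fun n h => hw0 n (by rw [← hint n, h, mul_zero])
  have hlog : ∀ n, Real.log (‖w n‖)
      = (poissonRep W (Λ n)).re + Real.log (u n) := by
    intro n
    rw [← hint n, norm_mul, hFeq (Λ n) (hball0 n), Complex.norm_exp,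
      Real.log_mul (Real.exp_ne_zero _) (by simpa [hu] using hIne n), Real.log_exp]
  have h1to0 : Tendsto (fun n => 1 - ‖Λ n‖) atTop (𝓝 0) := by
    have h := (tendsto_const_nhds (x := (1:ℝ)) (f := atTop (α := ℕ))).sub habs1
    simpa using h
  have hA := tendsto_aux hW Λ hball habs1
  have hB : Tendsto (fun n => (1 - ‖Λ n‖) * Real.log (u n)) atTop (𝓝 0) := by
    apply squeeze_zero_norm' (a := fun n => (1 - ‖Λ n‖) * |Real.log (L/2)|)
    · filter_upwards [hev] with n hn
      have hL2 : (0:ℝ) < L/2 := by linarith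
      have hlog1 : Real.log (u n) ≤ 0 := Real.log_nonpos (hlb n) (hub n)
      have hlog2 : Real.log (L/2) ≤ Real.log (u n) := Real.log_le_log hL2 hn.le
      have habs : |Real.log (u n)| ≤ |Real.log (L/2)| := by
        rw [abs_of_nonpos hlog1]
        calc -Real.log (u n) ≤ -Real.log (L/2) := by linarith
          _ ≤ |Real.log (L/2)| := neg_le_abs _
      rw [Real.norm_eq_abs, abs_mul, abs_of_nonneg (by linarith [hball n])]
      exact mul_le_mul_of_nonneg_left habs (by linarith [hball n])
    · have := h1to0.mul_const |Real.log (L/2)|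
      simpa using this
  apply hnot
  have hsum := hA.add hB
  rw [add_zero] at hsum
  apply hsum.congr
  intro n
  rw [hlog n]
  ring
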